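/- Let A(x) = Γ(x+1) (the real Gamma function) and B(x) = cos(x), and for each real a let U_a be the L₁-iterated sequence of (A, B) with initial value a. Then for every real a the sequence U_a is not eventually periodic: there do not exist a positive integer p and an index N such that U_a(n+p) = U_a(n) for all n ≥ N. -/

import Mathlib

/-- The Thue–Morse sequence: `thueMorse n` is `true` iff the number of `1`s in
the binary expansion of `n` is odd. -/
def thueMorse (n : ℕ) : Bool := decide (Odd ((Nat.digits 2 n).count 1))

/-- The L₁-iterated sequence of a pair of maps `(A, B)` with initial value `a`. -/
def L1Seq (A B : ℝ → ℝ) (a : ℝ) : ℕ → ℝ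
  | 0 => a
  | n + 1 => if thueMorse n then B (L1Seq A B a n) else A (L1Seq A B a n)

section Aux

open Real

lemma tm_zero : thueMorse 0 = false := by simp [thueMorse]

lemma tm_two_mul (n : ℕ) : thueMorse (2 * n) = thueMorse n := by
  rcases Nat.eq_zero_or_pos n with rfl | hn
  · rfl
  · unfold thueMorse
    rw [Nat.digits_def' (by norm_num : (1:ℕ) < 2) (by omega : 0 < 2 * n)]
    simp [Nat.mul_div_cancel_left _ (by norm_num : 0 < 2), Nat.mul_mod_right]

lemma tm_two_mul_add_one (n : ℕ) : thueMorse (2 * n + 1) = !thueMorse n := by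
  unfold thueMorse
  rw [Nat.digits_def' (by norm_num : (1:ℕ) < 2) (by omega : 0 < 2 * n + 1)]
  have h1 : (2 * n + 1) % 2 = 1 := by omega
  have h2 : (2 * n + 1) / 2 = n := by omega
  rw [h1, h2, List.count_cons]
  rcases Decidable.em (Odd ((Nat.digits 2 n).count 1)) with h | h <;>
    simp [h, Nat.odd_add_one, Nat.not_odd_iff_even, Nat.even_add_one,
      Nat.not_even_iff_odd]

lemma tm_one : thueMorse 1 = true := by
  have := tm_two_mul_add_one 0
  simpa [tm_zero] using this

lemma tm_scale : ∀ (L m w : ℕ), w < 2 ^ L →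
    thueMorse (m * 2 ^ L + w) = xor (thueMorse m) (thueMorse w) := by
  intro L
  induction L with
  | zero =>
    intro m w hw
    interval_cases w
    simp [tm_zero]
  | succ L ih =>
    intro m w hw
    have hp : (2:ℕ) ^ (L + 1) = 2 * 2 ^ L := by rw [pow_succ]; ring
    rcases Nat.even_or_odd w with ⟨u, hu⟩ | ⟨u, hu⟩
    · have hu2 : u < 2 ^ L := by omega
      have e : m * 2 ^ (L + 1) + w = 2 * (m * 2 ^ L + u) := by
        rw [hp, show m * (2 * 2 ^ L) = 2 * (m * 2 ^ L) by ring]; omega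
      have hw2 : w = 2 * u := by omega
      rw [e, tm_two_mul, ih m u hu2, hw2, tm_two_mul]
    · have hu2 : u < 2 ^ L := by omega
      have e : m * 2 ^ (L + 1) + w = 2 * (m * 2 ^ L + u) + 1 := by
        rw [hp, show m * (2 * 2 ^ L) = 2 * (m * 2 ^ L) by ring]; omega
      have hw2 : w = 2 * u + 1 := by omega
      rw [e, tm_two_mul_add_one, ih m u hu2, hw2, tm_two_mul_add_one]
      cases thueMorse m <;> cases thueMorse u <;> rfl

lemma tm_pow2 (k : ℕ) : thueMorse (2 ^ k) = true := by
  induction k with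
  | zero => exact tm_one
  | succ k ih => rw [pow_succ, mul_comm, tm_two_mul]; exact ih

lemma tm_three_pow2 (k : ℕ) : thueMorse (3 * 2 ^ k) = false := by
  induction k with
  | zero =>
    show thueMorse (3 * 1) = false
    rw [(by norm_num : 3 * 1 = 2 * 1 + 1), tm_two_mul_add_one, tm_one]
    rfl
  | succ k ih =>
    have e : 3 * 2 ^ (k + 1) = 2 * (3 * 2 ^ k) := by ring
    rw [e, tm_two_mul]; exact ih

lemma exists_mismatch : ∀ q : ℕ, 1 ≤ q → ∃ i, thueMorse i ≠ thueMorse (i + q) := by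
  intro q
  induction q using Nat.strong_induction_on with
  | _ q ih =>
  intro hq
  rcases Nat.even_or_odd q with ⟨q', hq'⟩ | ⟨g, hg⟩
  · obtain ⟨i, hi⟩ := ih q' (by omega) (by omega)
    refine ⟨2 * i, ?_⟩
    have e : 2 * i + q = 2 * (i + q') := by omega
    rw [e, tm_two_mul, tm_two_mul]; exact hi
  · by_contra hcon
    push_neg at hcon
    have key : ∀ j, thueMorse (j + g) = thueMorse (j + g + 1) := by
      intro j
      have h1 := hcon (2 * j)
      have h2 := hcon (2 * j + 1)
      rw [(by omega : 2 * j + q = 2 * (j + g) + 1), tm_two_mul, tm_two_mul_add_one] at h1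
      rw [(by omega : 2 * j + 1 + q = 2 * (j + g + 1)), tm_two_mul_add_one, tm_two_mul] at h2
      have hA : thueMorse (j + g) = !thueMorse j := by rw [h1, Bool.not_not]
      have hB : thueMorse (j + g + 1) = !thueMorse j := h2.symm
      rw [hA, hB]
    have const : ∀ d, thueMorse (g + d) = thueMorse g := by
      intro d
      induction d with
      | zero => rfl
      | succ d ihd =>
        have hk := key d
        have e1 : g + (d + 1) = d + g + 1 := by omega
        have e2 : d + g = g + d := by omega
        rw [e1, ← hk, e2, ihd]
    have hg1 : g ≤ 2 ^ g := (Nat.lt_two_pow_self (n := g)).le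
    have hg2 : g ≤ 3 * 2 ^ g := by omega
    have h1 := const (2 ^ g - g)
    have h2 := const (3 * 2 ^ g - g)
    rw [(by omega : g + (2 ^ g - g) = 2 ^ g), tm_pow2] at h1
    rw [(by omega : g + (3 * 2 ^ g - g) = 3 * 2 ^ g), tm_three_pow2] at h2
    rw [← h2] at h1
    exact Bool.false_ne_true h1.symm

/-- Mismatches exist beyond any bound. -/
lemma exists_mismatch_ge (q N : ℕ) (hq : 1 ≤ q) :
    ∃ i, N ≤ i ∧ thueMorse i ≠ thueMorse (i + q) := by
  obtain ⟨i, hi⟩ := exists_mismatch q hq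
  set L := N + i + q with hL
  have h2L : N + i + q < 2 ^ L := Nat.lt_two_pow_self (n := L)
  refine ⟨2 ^ L + i, by omega, ?_⟩
  have e1 : 2 ^ L + i = 1 * 2 ^ L + i := by ring
  have e2 : 2 ^ L + i + q = 1 * 2 ^ L + (i + q) := by ring
  rw [e2, e1, tm_scale L 1 i (by omega), tm_scale L 1 (i + q) (by omega), tm_one]
  cases h : thueMorse i <;> cases h' : thueMorse (i + q) <;> simp_all

/-- Strided mismatches: in every residue class mod `2^a`. -/
lemma strided_mismatch : ∀ (c : ℕ), ∀ (q s : ℕ), 1 ≤ q →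
    ∃ k, thueMorse (2 ^ c * k + s) ≠ thueMorse (2 ^ c * k + s + 2 ^ c * q) := by
  intro c
  induction c with
  | zero =>
    intro q s hq
    obtain ⟨i, hiN, hi⟩ := exists_mismatch_ge q s hq
    refine ⟨i - s, ?_⟩
    have e1 : 2 ^ 0 * (i - s) + s = i := by simp; omega
    have e2 : 2 ^ 0 * (i - s) + s + 2 ^ 0 * q = i + q := by simp; omega
    rw [e2, e1]; exact hi
  | succ c ih =>
    intro q s hq
    obtain ⟨k, hk⟩ := ih q (s / 2) hq
    refine ⟨k, ?_⟩
    have hp : (2:ℕ) ^ (c + 1) = 2 * 2 ^ c := by rw [pow_succ]; ring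
    rcases Nat.even_or_odd s with ⟨u, hu⟩ | ⟨u, hu⟩
    · have hu' : s / 2 = u := by omega
      have e1 : 2 ^ (c+1) * k + s = 2 * (2 ^ c * k + s / 2) := by
        rw [hp, hu', show 2 * 2 ^ c * k = 2 * (2 ^ c * k) by ring]; omega
      have e2 : 2 ^ (c+1) * k + s + 2 ^ (c+1) * q = 2 * (2 ^ c * k + s / 2 + 2 ^ c * q) := by
        rw [hp, hu', show 2 * 2 ^ c * k = 2 * (2 ^ c * k) by ring,
          show 2 * 2 ^ c * q = 2 * (2 ^ c * q) by ring]; omega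
      rw [e2, e1, tm_two_mul, tm_two_mul]; exact hk
    · have hu' : s / 2 = u := by omega
      have e1 : 2 ^ (c+1) * k + s = 2 * (2 ^ c * k + s / 2) + 1 := by
        rw [hp, hu', show 2 * 2 ^ c * k = 2 * (2 ^ c * k) by ring]; omega
      have e2 : 2 ^ (c+1) * k + s + 2 ^ (c+1) * q = 2 * (2 ^ c * k + s / 2 + 2 ^ c * q) + 1 := by
        rw [hp, hu', show 2 * 2 ^ c * k = 2 * (2 ^ c * k) by ring,
          show 2 * 2 ^ c * q = 2 * (2 ^ c * q) by ring]; omega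
      rw [e2, e1, tm_two_mul_add_one, tm_two_mul_add_one]
      exact fun h => hk (Bool.not_inj h)

/-- Euler: `2^(aa + k·φ(b)) ≡ 2^aa [MOD 2^aa * b]` for odd `b`. -/
lemma pow_two_modeq (aa b k : ℕ) (hb : Odd b) :
    2 ^ (aa + k * Nat.totient b) ≡ 2 ^ aa [MOD 2 ^ aa * b] := by
  have hb1 : 1 ≤ b := hb.pos
  have hcop : Nat.Coprime 2 b := by
    exact Nat.coprime_two_left.mpr hb
  have hcop2 : Nat.Coprime (2 ^ aa) b := Nat.Coprime.pow_left _ hcop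
  rw [← Nat.modEq_and_modEq_iff_modEq_mul hcop2]
  constructor
  · have h1 : (2:ℕ) ^ aa ∣ 2 ^ (aa + k * Nat.totient b) := pow_dvd_pow 2 (by omega)
    have h2 : (2:ℕ) ^ aa ∣ 2 ^ aa := dvd_rfl
    exact ((Nat.modEq_zero_iff_dvd).mpr h1).trans ((Nat.modEq_zero_iff_dvd).mpr h2).symm
  · have he : (2:ℕ) ^ Nat.totient b ≡ 1 [MOD b] := Nat.ModEq.pow_totient hcop
    calc 2 ^ (aa + k * Nat.totient b) = 2 ^ aa * (2 ^ Nat.totient b) ^ k := by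
          rw [pow_add, mul_comm k, pow_mul]
        _ ≡ 2 ^ aa * 1 ^ k [MOD b] := Nat.ModEq.mul_left _ (he.pow k)
        _ = 2 ^ aa := by ring

lemma triple_mismatch (p N : ℕ) (hp : 1 ≤ p) :
    ∃ n₁ n₂ n₃ : ℕ, N ≤ n₁ ∧ N ≤ n₂ ∧ N ≤ n₃ ∧
      thueMorse n₁ ≠ thueMorse (n₁ + p) ∧ thueMorse n₂ ≠ thueMorse (n₂ + p) ∧
      thueMorse n₃ ≠ thueMorse (n₃ + p) ∧
      n₂ ≡ n₁ + 1 [MOD p] ∧ n₃ ≡ n₁ + 2 [MOD p] := by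
  obtain ⟨aa, b, hb2, rfl⟩ :=
    Nat.exists_eq_pow_mul_and_not_dvd (show p ≠ 0 by omega) 2 (by norm_num)
  have hbodd : Odd b := Nat.odd_iff.mpr (by
    rcases Nat.mod_two_eq_zero_or_one b with h | h
    · exact absurd (Nat.dvd_of_mod_eq_zero h) hb2
    · exact h)
  have hb1 : 1 ≤ b := hbodd.pos
  obtain ⟨k₀, hk₀⟩ := strided_mismatch aa b 0 hb1
  obtain ⟨k₁, hk₁⟩ := strided_mismatch aa b 1 hb1
  obtain ⟨k₂, hk₂⟩ := strided_mismatch aa b 2 hb1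
  set w₀ := 2 ^ aa * k₀ + 0 with hw₀
  set w₁ := 2 ^ aa * k₁ + 1 with hw₁
  set w₂ := 2 ^ aa * k₂ + 2 with hw₂
  set P := 2 ^ aa * b with hP
  set C := k₀ + k₁ + k₂ + 1 with hC
  set K := N + w₀ + w₁ + w₂ + P with hK
  set φb := Nat.totient b with hφ
  have hφ1 : 1 ≤ φb := Nat.totient_pos.mpr hb1
  set L := aa + K * φb with hLdef
  have hKL : K ≤ L := by
    have := Nat.le_mul_of_pos_right K hφ1
    omega
  have h2K : K < 2 ^ K := Nat.lt_two_pow_self (n := K)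
  have h2L : K < 2 ^ L := lt_of_lt_of_le h2K (Nat.pow_le_pow_right (by norm_num) hKL)
  have hmod : 2 ^ L ≡ 2 ^ aa [MOD P] := pow_two_modeq aa b K hbodd
  have key : ∀ (ki wi : ℕ) (i : ℕ), wi = 2 ^ aa * ki + i → ki + 1 ≤ C → wi + P ≤ K →
      thueMorse wi ≠ thueMorse (wi + P) →
      N ≤ (C - ki) * 2 ^ L + wi ∧
      thueMorse ((C - ki) * 2 ^ L + wi) ≠ thueMorse ((C - ki) * 2 ^ L + wi + P) ∧
      (C - ki) * 2 ^ L + wi ≡ 2 ^ aa * C + i [MOD P] := by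
    intro ki wi i hwi hki hwK hmis
    have hwL : wi + P < 2 ^ L := by omega
    have hci : 1 ≤ C - ki := by omega
    refine ⟨?_, ?_, ?_⟩
    · have : 2 ^ L ≤ (C - ki) * 2 ^ L := Nat.le_mul_of_pos_left _ hci
      omega
    · have e2 : (C - ki) * 2 ^ L + wi + P = (C - ki) * 2 ^ L + (wi + P) := by omega
      rw [e2, tm_scale L (C - ki) wi (by omega), tm_scale L (C - ki) (wi + P) hwL]
      intro h
      apply hmis
      cases hc : thueMorse (C - ki) <;> rw [hc] at h <;> simpa using h
    · calc (C - ki) * 2 ^ L + wi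
          ≡ (C - ki) * 2 ^ aa + wi [MOD P] := (hmod.mul_left (C - ki)).add_right wi
        _ = 2 ^ aa * C + i := by
            rw [hwi]
            have : (C - ki) * 2 ^ aa + 2 ^ aa * ki = 2 ^ aa * C := by
              rw [Nat.mul_comm (C - ki)]
              rw [← Nat.mul_add]
              congr 1
              omega
            omega
  have hwK0 : w₀ + P ≤ K := by omega
  have hwK1 : w₁ + P ≤ K := by omega
  have hwK2 : w₂ + P ≤ K := by omega
  obtain ⟨hN0, hm0, hc0⟩ := key k₀ w₀ 0 rfl (by omega) hwK0 hk₀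
  obtain ⟨hN1, hm1, hc1⟩ := key k₁ w₁ 1 rfl (by omega) hwK1 hk₁
  obtain ⟨hN2, hm2, hc2⟩ := key k₂ w₂ 2 rfl (by omega) hwK2 hk₂
  refine ⟨(C - k₀) * 2 ^ L + w₀, (C - k₁) * 2 ^ L + w₁, (C - k₂) * 2 ^ L + w₂,
    hN0, hN1, hN2, hm0, hm1, hm2, ?_, ?_⟩
  · exact hc1.trans ((hc0.add_right 1).symm)
  · exact hc2.trans ((hc0.add_right 2).symm)

lemma gamma_three_halves : Real.Gamma (3 / 2) = Real.sqrt π / 2 := by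
  have h := Real.Gamma_add_one (show (1:ℝ)/2 ≠ 0 by norm_num)
  rw [show (1:ℝ)/2 + 1 = 3/2 by norm_num, Real.Gamma_one_half_eq] at h
  rw [h]; ring

lemma key_ineq (z : ℝ) (h1 : 1/2 ≤ z) (h2 : z ≤ 1) :
    Real.cos z < Real.Gamma (z + 1) := by
  have hs2 : Real.sqrt π ^ 2 = π := Real.sq_sqrt Real.pi_pos.le
  have hs0 : 0 < Real.sqrt π := Real.sqrt_pos.mpr Real.pi_pos
  have hπ : 3.141592 < π := Real.pi_gt_d6
  have hs : 1.772 < Real.sqrt π := by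
    nlinarith [Real.sq_sqrt Real.pi_pos.le, Real.sqrt_nonneg π]
  -- cosine upper bound
  have hcb := Real.cos_bound (show |z| ≤ 1 by rw [abs_of_nonneg (by linarith)]; exact h2)
  rw [abs_of_nonneg (by linarith : (0:ℝ) ≤ z)] at hcb
  have hcos : Real.cos z ≤ 1 - z ^ 2 / 2 + z ^ 4 * (5 / 96) := by
    have := (abs_sub_le_iff.mp hcb).1
    linarith
  -- Gamma lower bound by convexity
  have hgam : Real.sqrt π / 2 + (Real.sqrt π - 2) * (z - 1/2) ≤ Real.Gamma (z + 1) := by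
    rcases eq_or_lt_of_le h1 with heq | hlt
    · rw [← heq]
      rw [show (1:ℝ)/2 + 1 = 3/2 by norm_num, gamma_three_halves]
      ring_nf
      exact le_rfl
    · have hslope := Real.convexOn_Gamma.slope_mono_adjacent
        (Set.mem_Ioi.mpr (by norm_num : (0:ℝ) < 1))
        (Set.mem_Ioi.mpr (by linarith : (0:ℝ) < z + 1))
        (by norm_num : (1:ℝ) < 3/2) (by linarith : (3:ℝ)/2 < z + 1)
      rw [Real.Gamma_one, gamma_three_halves] at hslope
      have e1 : (Real.sqrt π / 2 - 1) / (3/2 - 1) = Real.sqrt π - 2 := by ring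
      rw [e1] at hslope
      have hz : (0:ℝ) < z + 1 - 3/2 := by linarith
      have h' := (le_div_iff₀ hz).mp hslope
      nlinarith [h']
  -- final polynomial inequality
  have hpoly : 1 - z ^ 2 / 2 + z ^ 4 * (5 / 96) <
      Real.sqrt π / 2 + (Real.sqrt π - 2) * (z - 1/2) := by
    nlinarith [mul_nonneg (sub_nonneg.mpr h1) (sub_nonneg.mpr h2),
      sq_nonneg (z - 1/2), sq_nonneg (z - 1), sq_nonneg z,
      mul_nonneg (mul_nonneg (sub_nonneg.mpr h1) (sub_nonneg.mpr h2)) (sq_nonneg z),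
      mul_nonneg (sub_nonneg.mpr hs.le) (by linarith : (0:ℝ) ≤ z)]
  linarith

end Aux

/-- For `A x = Γ (x + 1)` and `B x = cos x`, no L₁-iterated sequence of the
family is eventually periodic. -/
theorem L1Seq_gamma_cos_not_eventually_periodic (a : ℝ) :
    ¬ ∃ p : ℕ, 0 < p ∧ ∃ N : ℕ, ∀ n : ℕ, N ≤ n →
      L1Seq (fun x => Real.Gamma (x + 1)) Real.cos a (n + p) =
        L1Seq (fun x => Real.Gamma (x + 1)) Real.cos a n := by
  rintro ⟨p, hp, N, hper⟩
  set A : ℝ → ℝ := fun x => Real.Gamma (x + 1) with hA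
  set U : ℕ → ℝ := L1Seq A Real.cos a with hU
  have hstep : ∀ n, U (n + 1) = if thueMorse n then Real.cos (U n) else A (U n) := by
    intro n; rfl
  -- transport along multiples of p
  have hmul : ∀ k n, N ≤ n → U (n + k * p) = U n := by
    intro k
    induction k with
    | zero => intro n _; simp
    | succ k ih =>
      intro n hn
      have e : n + (k + 1) * p = (n + k * p) + p := by ring
      rw [e, hper _ (by omega), ih n hn]
  have hcongr : ∀ m n, N ≤ m → N ≤ n → m ≡ n [MOD p] → U m = U n := by
    intro m n hm hn hmn
    rcases le_total m n with h | h
    · obtain ⟨d, hd⟩ := (Nat.modEq_iff_dvd' h).mp hmn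
      have hpd : p * d = d * p := Nat.mul_comm p d
      have : n = m + d * p := by omega
      rw [this, hmul d m hm]
    · obtain ⟨d, hd⟩ := (Nat.modEq_iff_dvd' h).mp hmn.symm
      have hpd : p * d = d * p := Nat.mul_comm p d
      have : m = n + d * p := by omega
      rw [this, hmul d n hn]
  -- a mismatch forces Γ(U n + 1) = cos (U n), and then U (n+1) = cos (U n)
  have hmism : ∀ n, N ≤ n → thueMorse n ≠ thueMorse (n + p) →
      Real.Gamma (U n + 1) = Real.cos (U n) ∧ U (n + 1) = Real.cos (U n) := by
    intro n hn hne
    have h1 : U (n + p + 1) = U (n + 1) := by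
      have := hper (n + 1) (by omega)
      rw [show n + 1 + p = n + p + 1 by ring] at this
      exact this
    have h2 : U (n + p) = U n := hper n hn
    have e1 := hstep n
    have e2 := hstep (n + p)
    rw [h1, h2] at e2
    cases ht : thueMorse n with
    | false =>
      have ht' : thueMorse (n + p) = true := by
        cases h : thueMorse (n + p)
        · rw [ht, h] at hne; exact absurd rfl hne
        · rfl
      rw [ht] at e1; rw [ht'] at e2
      norm_num at e1 e2
      -- e1 : U (n+1) = A (U n), e2 : U (n+1) = cos (U n)
      refine ⟨?_, e2⟩
      rw [← e2, e1]
    | true =>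
      have ht' : thueMorse (n + p) = false := by
        cases h : thueMorse (n + p)
        · rfl
        · rw [ht, h] at hne; exact absurd rfl hne
      rw [ht] at e1; rw [ht'] at e2
      norm_num at e1 e2
      refine ⟨?_, e1⟩
      rw [← e1, e2]
  obtain ⟨n₁, n₂, n₃, hN1, hN2, hN3, hm1, hm2, hm3, hc2, hc3⟩ :=
    triple_mismatch p N hp
  obtain ⟨hg1, hs1⟩ := hmism n₁ hN1 hm1
  obtain ⟨hg2, hs2⟩ := hmism n₂ hN2 hm2
  obtain ⟨hg3, _⟩ := hmism n₃ hN3 hm3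
  -- y = U n₂ = cos (U n₁) ∈ [-1, 1]
  have hy : U n₂ = Real.cos (U n₁) := by
    rw [hcongr n₂ (n₁ + 1) hN2 (by omega) hc2, hs1]
  -- z = U n₃ = cos (U n₂) ∈ [cos 1, 1]
  have hc3' : n₃ ≡ n₂ + 1 [MOD p] := by
    have : n₂ + 1 ≡ n₁ + 1 + 1 [MOD p] := hc2.add_right 1
    exact hc3.trans (by rw [show n₁ + 2 = n₁ + 1 + 1 by ring]; exact this.symm)
  have hz : U n₃ = Real.cos (U n₂) := by
    rw [hcongr n₃ (n₂ + 1) hN3 (by omega) hc3', hs2]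
  -- bounds
  have hy1 : -1 ≤ U n₂ := by rw [hy]; exact Real.neg_one_le_cos _
  have hy2 : U n₂ ≤ 1 := by rw [hy]; exact Real.cos_le_one _
  have hcos1 : (1:ℝ)/2 < Real.cos 1 := by
    rw [← Real.cos_pi_div_three]
    apply Real.cos_lt_cos_of_nonneg_of_le_pi (by norm_num)
      (by linarith [Real.pi_pos])
    linarith [Real.pi_gt_three]
  have hz1 : 1/2 ≤ U n₃ := by
    rw [hz, ← Real.cos_abs]
    have h1 : Real.cos 1 ≤ Real.cos |U n₂| := by
      apply Real.cos_le_cos_of_nonneg_of_le_pi (abs_nonneg _)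
        (by linarith [Real.pi_gt_three])
      rw [abs_le]; exact ⟨hy1, hy2⟩
    linarith
  have hz2 : U n₃ ≤ 1 := by rw [hz]; exact Real.cos_le_one _
  have := key_ineq (U n₃) hz1 hz2
  rw [hg3] at this
  exact lt_irrefl _ this
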